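/- Let N' be an orchard binary phylogenetic network obtained from a network N by adding ℓ leaves to reticulation arcs of N. Then the restriction to the vertices of N of any HGT-consistent labelling of N' is a non-temporal labelling of N with at most ℓ inrets; in particular V_OR(N) ≤ L_OR(N). -/
import Mathlib


namespace PhyloNet

/-- A binary phylogenetic network, encoded on vertex set `verts ⊆ ℕ`. -/
structure Network where
  verts : Finset ℕ
  arc : ℕ → ℕ → Bool
  root : ℕ
  root_mem : root ∈ verts
  arc_mem : ∀ u v : ℕ, arc u v = true → u ∈ verts ∧ v ∈ verts
  acyclic : ∀ v : ℕ, ¬ Relation.TransGen (fun a b : ℕ => arc a b = true) v v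
  root_indeg : (verts.filter fun u => arc u root = true).card = 0
  root_outdeg : (verts.filter fun w => arc root w = true).card = 1
  nonroot_deg : ∀ v ∈ verts, v ≠ root →
    ((verts.filter fun u => arc u v = true).card = 1 ∧
      (verts.filter fun w => arc v w = true).card = 2) ∨
    ((verts.filter fun u => arc u v = true).card = 2 ∧
      (verts.filter fun w => arc v w = true).card = 1) ∨
    ((verts.filter fun u => arc u v = true).card = 1 ∧
      (verts.filter fun w => arc v w = true).card = 0)

def inDeg (N : Network) (v : ℕ) : ℕ := (N.verts.filter fun u => N.arc u v = true).card

def outDeg (N : Network) (v : ℕ) : ℕ := (N.verts.filter fun w => N.arc v w = true).card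

def IsLeaf (N : Network) (v : ℕ) : Prop := v ∈ N.verts ∧ inDeg N v = 1 ∧ outDeg N v = 0

def IsRet (N : Network) (v : ℕ) : Prop := v ∈ N.verts ∧ inDeg N v = 2

def IsTreeVert (N : Network) (v : ℕ) : Prop := v ∈ N.verts ∧ inDeg N v = 1 ∧ outDeg N v = 2

def IsInternal (N : Network) (v : ℕ) : Prop := v ∈ N.verts ∧ v ≠ N.root ∧ ¬ IsLeaf N v

def IsTree (N : Network) : Prop := ∀ v : ℕ, ¬ IsRet N v

noncomputable def retCount (N : Network) : ℕ := {v : ℕ | IsRet N v}.ncard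

/-- Tree-child: every non-leaf vertex has a child that is a tree vertex or a leaf. -/
def IsTreeChild (N : Network) : Prop :=
  ∀ v ∈ N.verts, ¬ IsLeaf N v → ∃ w : ℕ, N.arc v w = true ∧ (IsTreeVert N w ∨ IsLeaf N w)

/-- An omnian: an internal vertex all of whose children are reticulations. -/
def IsOmnian (N : Network) (v : ℕ) : Prop :=
  IsInternal N v ∧ ∀ w : ℕ, N.arc v w = true → IsRet N w

noncomputable def omnianCount (N : Network) : ℕ := {v : ℕ | IsOmnian N v}.ncard

/-- `N'` is obtained from `N` by adding a leaf to the arc `uv`: the arc is subdivided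
by a fresh vertex `w`, and a fresh leaf `x` is attached to `w`. -/
def IsLeafAdditionOn (N N' : Network) (u v : ℕ) : Prop :=
  N.arc u v = true ∧ ∃ w x : ℕ, w ∉ N.verts ∧ x ∉ N.verts ∧ w ≠ x ∧
    N'.verts = insert w (insert x N.verts) ∧ N'.root = N.root ∧
    ∀ a b : ℕ, (N'.arc a b = true ↔
      ((N.arc a b = true ∧ ¬ (a = u ∧ b = v)) ∨ (a = u ∧ b = w) ∨
        (a = w ∧ b = v) ∨ (a = w ∧ b = x)))

def IsLeafAddition (N N' : Network) : Prop := ∃ u v : ℕ, IsLeafAdditionOn N N' u v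

/-- `N'` is obtained from `N` by adding a leaf to a reticulation arc. -/
def IsRetArcLeafAddition (N N' : Network) : Prop :=
  ∃ u v : ℕ, IsRet N v ∧ IsLeafAdditionOn N N' u v

/-- `P` holds after exactly `k` steps of relation `step` starting from `N`. -/
def ReachableBy (step : Network → Network → Prop) (N : Network) (k : ℕ)
    (P : Network → Prop) : Prop :=
  ∃ M : ℕ → Network, M 0 = N ∧ (∀ i : ℕ, i < k → step (M i) (M (i + 1))) ∧ P (M k)

/-- The minimum number of leaf additions needed to bring `N` into the class `P`. -/
noncomputable def leafAddDist (P : Network → Prop) (N : Network) : ℕ :=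
  sInf {k : ℕ | ReachableBy IsLeafAddition N k P}

noncomputable def LTC (N : Network) : ℕ := leafAddDist IsTreeChild N

/-- Reduction of a cherry (x,y): delete the leaf x and suppress its parent p
(whose own parent is q, gaining the arc q → y). -/
def ReducesCherry (N N' : Network) (x y : ℕ) : Prop :=
  ∃ p q : ℕ, IsLeaf N x ∧ IsLeaf N y ∧ x ≠ y ∧
    N.arc p x = true ∧ N.arc p y = true ∧ N.arc q p = true ∧
    N'.verts = (N.verts.erase x).erase p ∧ N'.root = N.root ∧
    ∀ a b : ℕ, (N'.arc a b = true ↔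
      (N.arc a b = true ∧ a ≠ p ∧ b ≠ p ∧ b ≠ x) ∨ (a = q ∧ b = y))

/-- Reduction of a reticulated cherry (x,y): delete the arc from the parent p_y of y
to the reticulation parent p_x of x, and clean up (suppressing p_x and p_y). -/
def ReducesRetCherry (N N' : Network) (x y : ℕ) : Prop :=
  ∃ px py z q : ℕ, IsLeaf N x ∧ IsLeaf N y ∧ IsRet N px ∧
    N.arc px x = true ∧ N.arc py px = true ∧ N.arc py y = true ∧
    N.arc z px = true ∧ z ≠ py ∧ N.arc q py = true ∧
    N'.verts = (N.verts.erase px).erase py ∧ N'.root = N.root ∧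
    ∀ a b : ℕ, (N'.arc a b = true ↔
      (N.arc a b = true ∧ a ≠ px ∧ a ≠ py ∧ b ≠ px ∧ b ≠ py) ∨
        (a = z ∧ b = x) ∨ (a = q ∧ b = y))

def CherryStep (N N' : Network) : Prop :=
  ∃ x y : ℕ, ReducesCherry N N' x y ∨ ReducesRetCherry N N' x y

/-- A network consisting of the root and a single leaf. -/
def IsSingleLeaf (N : Network) : Prop := ∃ x : ℕ, x ≠ N.root ∧ N.verts = {N.root, x}

/-- Orchard: reducible to a single leaf by cherry and reticulated cherry reductions. -/
def IsOrchard (N : Network) : Prop :=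
  ∃ N' : Network, Relation.ReflTransGen CherryStep N N' ∧ IsSingleLeaf N'

noncomputable def LOR (N : Network) : ℕ := leafAddDist IsOrchard N

/-- Tree-based: there is a spanning tree (a choice of one incoming arc for each
non-root vertex) all of whose leaves are leaves of `N`. -/
def IsTreeBased (N : Network) : Prop :=
  ∃ T : ℕ → ℕ → Bool, (∀ u v : ℕ, T u v = true → N.arc u v = true) ∧
    (∀ v ∈ N.verts, v ≠ N.root → (N.verts.filter fun u => T u v = true).card = 1) ∧
    (∀ v ∈ N.verts, ¬ IsLeaf N v → ∃ w : ℕ, T v w = true)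

noncomputable def LTB (N : Network) : ℕ := leafAddDist IsTreeBased N

/-- A zig-zag trail: a nonempty duplicate-free sequence of arcs in which
consecutive arcs share a tail or share a head. -/
def IsZigZag (N : Network) (s : List (ℕ × ℕ)) : Prop :=
  s ≠ [] ∧ s.Nodup ∧ (∀ a ∈ s, N.arc a.1 a.2 = true) ∧
    List.Chain' (fun a b : ℕ × ℕ => a.1 = b.1 ∨ a.2 = b.2) s

def IsMaximalZigZag (N : Network) (s : List (ℕ × ℕ)) : Prop :=
  IsZigZag N s ∧ ∀ t : List (ℕ × ℕ), IsZigZag N t → s.Sublist t → t.length = s.length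

/-- A W-fence: a maximal zig-zag trail of even length whose two end-arc tails
are both reticulations. -/
def IsWFence (N : Network) (s : List (ℕ × ℕ)) : Prop :=
  IsMaximalZigZag N s ∧ s.length % 2 = 0 ∧ 2 ≤ s.length ∧
    IsRet N (s.headD (0, 0)).1 ∧ IsRet N (s.getLastD (0, 0)).1

/-- An N-fence: a maximal zig-zag trail of odd length exactly one of whose
end-arc tails is a reticulation. -/
def IsNFence (N : Network) (s : List (ℕ × ℕ)) : Prop :=
  IsMaximalZigZag N s ∧ s.length % 2 = 1 ∧
    Xor' (IsRet N (s.headD (0, 0)).1) (IsRet N (s.getLastD (0, 0)).1)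

/-- A zig-zag decomposition: a set of maximal zig-zag trails partitioning the
non-root arcs of the network. -/
def IsZigZagDecomposition (N : Network) (D : Set (List (ℕ × ℕ))) : Prop :=
  (∀ s ∈ D, IsMaximalZigZag N s) ∧
  (∀ s ∈ D, ∀ p ∈ s, p.1 ≠ N.root) ∧
  (∀ a b : ℕ, N.arc a b = true → a ≠ N.root → ∃! s : List (ℕ × ℕ), s ∈ D ∧ (a, b) ∈ s)

/-- A cherry shape: two arcs with a common tail. -/
def IsCherryShape (N : Network) (s : Set (ℕ × ℕ)) : Prop :=
  ∃ p x y : ℕ, x ≠ y ∧ N.arc p x = true ∧ N.arc p y = true ∧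
    s = {(p, x), (p, y)}

/-- A reticulated cherry shape: arcs p_x x, p_y p_x, p_y y where p_x is a reticulation;
its middle arc is p_y p_x. -/
def IsRetCherryShape (N : Network) (s : Set (ℕ × ℕ)) : Prop :=
  ∃ x y px py : ℕ, IsRet N px ∧ N.arc px x = true ∧ N.arc py px = true ∧
    N.arc py y = true ∧ y ≠ px ∧ s = {(px, x), (py, px), (py, y)}

/-- `s` is a reticulated cherry shape with middle arc `(u, r)`. -/
def IsMiddleArcOf (N : Network) (s : Set (ℕ × ℕ)) (u r : ℕ) : Prop :=
  ∃ x y : ℕ, IsRet N r ∧ N.arc r x = true ∧ N.arc u r = true ∧ N.arc u y = true ∧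
    y ≠ r ∧ s = {(r, x), (u, r), (u, y)}

/-- A cherry cover: cherry shapes and reticulated cherry shapes covering every
non-root arc exactly once. -/
def IsCherryCover (N : Network) (P : Set (Set (ℕ × ℕ))) : Prop :=
  (∀ s ∈ P, IsCherryShape N s ∨ IsRetCherryShape N s) ∧
  (∀ a b : ℕ, N.arc a b = true → a ≠ N.root →
    ∃! s : Set (ℕ × ℕ), s ∈ P ∧ (a, b) ∈ s)

/-- The internal vertices of a shape are the tails of its arcs. -/
def shapeInternals (s : Set (ℕ × ℕ)) : Set ℕ := {p : ℕ | ∃ x : ℕ, (p, x) ∈ s}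

/-- The endpoints of a shape: heads of its arcs that are not tails of its arcs. -/
def shapeEndpoints (s : Set (ℕ × ℕ)) : Set ℕ :=
  {x : ℕ | (∃ p : ℕ, (p, x) ∈ s) ∧ ∀ y : ℕ, (x, y) ∉ s}

/-- In the auxiliary graph, shape `B` is directly above shape `C` if an internal
vertex of `C` is an endpoint of `B`. -/
def DirectlyAbove (B C : Set (ℕ × ℕ)) : Prop :=
  ∃ v : ℕ, v ∈ shapeEndpoints B ∧ v ∈ shapeInternals C

/-- The auxiliary graph of the cherry cover `P` contains a directed cycle. -/
def HasCyclicAux (P : Set (Set (ℕ × ℕ))) : Prop :=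
  ∃ s ∈ P, Relation.TransGen
    (fun B C : Set (ℕ × ℕ) => B ∈ P ∧ C ∈ P ∧ DirectlyAbove B C) s s

/-- A non-temporal labelling of `N`. -/
def IsNonTemporal (N : Network) (t : ℕ → ℝ) : Prop :=
  (∀ u v : ℕ, N.arc u v = true → t u ≤ t v) ∧
  (∀ u v : ℕ, N.arc u v = true → t u = t v → IsRet N v) ∧
  (∀ u : ℕ, IsInternal N u → ∃ v : ℕ, N.arc u v = true ∧ t u < t v) ∧
  (∀ r u v : ℕ, IsRet N r → N.arc u r = true → N.arc v r = true → u ≠ v →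
    ¬ (t u = t r ∧ t v = t r))

/-- An inret: a reticulation with no incoming horizontal arc
(i.e. both incoming arcs vertical). -/
def Inret (N : Network) (t : ℕ → ℝ) (r : ℕ) : Prop :=
  IsRet N r ∧ ∀ u : ℕ, N.arc u r = true → t u ≠ t r

noncomputable def inretCount (N : Network) (t : ℕ → ℝ) : ℕ := {r : ℕ | Inret N t r}.ncard

/-- HGT-consistent labelling: a non-temporal labelling in which every reticulation
has exactly one incoming horizontal arc. -/
def IsHGTConsistent (N : Network) (t : ℕ → ℝ) : Prop :=
  IsNonTemporal N t ∧ ∀ r : ℕ, IsRet N r → ∃! u : ℕ, N.arc u r = true ∧ t u = t r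

/-- V_OR: the minimum number of inrets over all non-temporal labellings. -/
noncomputable def VOR (N : Network) : ℕ :=
  sInf {k : ℕ | ∃ t : ℕ → ℝ, IsNonTemporal N t ∧ inretCount N t = k}

/-- The network `N` is the result of the vertex-cover reduction applied to `G`. -/
def IsVCReduction {α : Type} [Fintype α] [DecidableEq α] (G : SimpleGraph α)
    (N : Network) : Prop :=
  ∃ (R W L M : α → ℕ → ℕ) (P : α → ℕ) (S : ℕ → ℕ) (rho : ℕ)
    (e : ℕ → α) (pi tau : α → α → ℕ),
    (∀ v : α, ∃! i : ℕ, 1 ≤ i ∧ i ≤ Fintype.card α ∧ e i = v) ∧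
    (∀ v u : α, G.Adj v u → pi v u ∈ ({1, 2, 3} : Set ℕ)) ∧
    (∀ v u u' : α, G.Adj v u → G.Adj v u' → pi v u = pi v u' → u = u') ∧
    (∀ v u : α, G.Adj v u → tau v u ∈ ({5, 6, 7} : Set ℕ)) ∧
    (∀ v u u' : α, G.Adj v u → G.Adj v u' → tau v u = tau v u' → u = u') ∧
    Function.Injective
      (fun z : (α × Fin 8) ⊕ (α × Fin 7) ⊕ (α × Fin 5) ⊕ (α × Fin 4) ⊕ α ⊕
          (Fin (Fintype.card α - 1)) ⊕ Unit =>
        match z with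
        | Sum.inl (v, i) => R v i.1
        | Sum.inr (Sum.inl (v, i)) => W v (i.1 + 1)
        | Sum.inr (Sum.inr (Sum.inl (v, i))) => L v (i.1 + 1)
        | Sum.inr (Sum.inr (Sum.inr (Sum.inl (v, i)))) => M v (i.1 + 1)
        | Sum.inr (Sum.inr (Sum.inr (Sum.inr (Sum.inl v)))) => P v
        | Sum.inr (Sum.inr (Sum.inr (Sum.inr (Sum.inr (Sum.inl i))))) => S (i.1 + 1)
        | Sum.inr (Sum.inr (Sum.inr (Sum.inr (Sum.inr (Sum.inr _))))) => rho) ∧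
    N.root = rho ∧
    (∀ x : ℕ, x ∈ N.verts ↔
      (∃ v i, i ≤ 7 ∧ x = R v i) ∨ (∃ v i, 1 ≤ i ∧ i ≤ 7 ∧ x = W v i) ∨
      (∃ v i, 1 ≤ i ∧ i ≤ 5 ∧ x = L v i) ∨ (∃ v i, 1 ≤ i ∧ i ≤ 4 ∧ x = M v i) ∨
      (∃ v, x = P v) ∨ (∃ i, 1 ≤ i ∧ i ≤ Fintype.card α - 1 ∧ x = S i) ∨ x = rho) ∧
    (∀ a b : ℕ, N.arc a b = true ↔
      (a = rho ∧ b = S 1) ∨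
      (∃ i, 1 ≤ i ∧ i ≤ Fintype.card α - 2 ∧ a = S i ∧ b = S (i + 1)) ∨
      (∃ i, 1 ≤ i ∧ i ≤ Fintype.card α - 1 ∧ a = S i ∧ b = P (e i)) ∨
      (a = S (Fintype.card α - 1) ∧ b = P (e (Fintype.card α))) ∨
      (∃ v, a = P v ∧ (b = M v 4 ∨ b = W v 7)) ∨
      (∃ v, a = M v 4 ∧ (b = M v 3 ∨ b = R v 0)) ∨
      (∃ v, a = M v 3 ∧ (b = M v 2 ∨ b = W v 6)) ∨
      (∃ v, a = M v 2 ∧ (b = M v 1 ∨ b = W v 5)) ∨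
      (∃ v, a = M v 1 ∧ (b = R v 0 ∨ b = W v 4)) ∨
      (∃ v, a = R v 0 ∧ b = R v 1) ∨
      (∃ v i, 1 ≤ i ∧ i ≤ 6 ∧ a = W v i ∧ (b = R v i ∨ b = R v (i + 1))) ∨
      (∃ v, a = W v 7 ∧ (b = R v 7 ∨ b = L v 5)) ∨
      (∃ v i, 1 ≤ i ∧ i ≤ 4 ∧ a = R v i ∧ b = L v i) ∨
      (∃ u v, G.Adj u v ∧ a = R u (tau u v) ∧ b = W v (pi v u)))


/-! ### Auxiliary lemmas -/

lemma arc_irrefl (N : Network) (a : ℕ) : ¬ N.arc a a = true :=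
  fun h => N.acyclic a (Relation.TransGen.single h)

lemma arc_ne {N : Network} {a b : ℕ} (h : N.arc a b = true) : a ≠ b := by
  rintro rfl; exact arc_irrefl N a h

lemma root_no_in {N : Network} {a : ℕ} (h : N.arc a N.root = true) : False := by
  have ha := (N.arc_mem _ _ h).1
  have : a ∈ N.verts.filter (fun u => N.arc u N.root = true) :=
    Finset.mem_filter.mpr ⟨ha, h⟩
  have hc := Finset.card_pos.mpr ⟨a, this⟩
  have := N.root_indeg
  omega

lemma ne_root_of_parent {N : Network} {a v : ℕ} (h : N.arc a v = true) : v ≠ N.root := by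
  rintro rfl; exact root_no_in h

lemma leaf_no_out {N : Network} {x b : ℕ} (hx : IsLeaf N x) (h : N.arc x b = true) :
    False := by
  have hb := (N.arc_mem x b h).2
  have : b ∈ N.verts.filter (fun w => N.arc x w = true) := Finset.mem_filter.mpr ⟨hb, h⟩
  have hc := Finset.card_pos.mpr ⟨b, this⟩
  have := hx.2.2
  unfold outDeg at this
  omega

lemma indeg_one_parent {N : Network} {v a b : ℕ} (h1 : inDeg N v = 1)
    (ha : N.arc a v = true) (hb : N.arc b v = true) : a = b := by
  have hma : a ∈ N.verts.filter (fun u => N.arc u v = true) :=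
    Finset.mem_filter.mpr ⟨(N.arc_mem _ _ ha).1, ha⟩
  have hmb : b ∈ N.verts.filter (fun u => N.arc u v = true) :=
    Finset.mem_filter.mpr ⟨(N.arc_mem _ _ hb).1, hb⟩
  exact Finset.card_le_one.mp (le_of_eq h1) a hma b hmb

lemma outdeg_one_child {N : Network} {v a b : ℕ} (h1 : outDeg N v = 1)
    (ha : N.arc v a = true) (hb : N.arc v b = true) : a = b := by
  have hma : a ∈ N.verts.filter (fun w => N.arc v w = true) :=
    Finset.mem_filter.mpr ⟨(N.arc_mem _ _ ha).2, ha⟩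
  have hmb : b ∈ N.verts.filter (fun w => N.arc v w = true) :=
    Finset.mem_filter.mpr ⟨(N.arc_mem _ _ hb).2, hb⟩
  exact Finset.card_le_one.mp (le_of_eq h1) a hma b hmb

lemma indeg_two_parents {N : Network} {v p1 p2 a : ℕ} (h2 : inDeg N v = 2)
    (hp : p1 ≠ p2) (h1 : N.arc p1 v = true) (h2' : N.arc p2 v = true)
    (ha : N.arc a v = true) : a = p1 ∨ a = p2 := by
  have hsub : ({p1, p2} : Finset ℕ) ⊆ N.verts.filter (fun u => N.arc u v = true) := by
    intro z hz
    rcases Finset.mem_insert.mp hz with rfl | hz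
    · exact Finset.mem_filter.mpr ⟨(N.arc_mem _ _ h1).1, h1⟩
    · rcases Finset.mem_singleton.mp hz with rfl
      exact Finset.mem_filter.mpr ⟨(N.arc_mem _ _ h2').1, h2'⟩
  have hcard : ({p1, p2} : Finset ℕ).card = 2 := by
    rw [Finset.card_insert_of_notMem (by simpa using hp), Finset.card_singleton]
  have heq : N.verts.filter (fun u => N.arc u v = true) = {p1, p2} :=
    (Finset.eq_of_subset_of_card_le hsub (by rw [hcard]; exact le_of_eq h2)).symm
  have hma : a ∈ N.verts.filter (fun u => N.arc u v = true) :=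
    Finset.mem_filter.mpr ⟨(N.arc_mem _ _ ha).1, ha⟩
  rw [heq] at hma
  simpa using hma

lemma outdeg_two_children {N : Network} {v c1 c2 a : ℕ} (h2 : outDeg N v = 2)
    (hp : c1 ≠ c2) (h1 : N.arc v c1 = true) (h2' : N.arc v c2 = true)
    (ha : N.arc v a = true) : a = c1 ∨ a = c2 := by
  have hsub : ({c1, c2} : Finset ℕ) ⊆ N.verts.filter (fun w => N.arc v w = true) := by
    intro z hz
    rcases Finset.mem_insert.mp hz with rfl | hz
    · exact Finset.mem_filter.mpr ⟨(N.arc_mem _ _ h1).2, h1⟩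
    · rcases Finset.mem_singleton.mp hz with rfl
      exact Finset.mem_filter.mpr ⟨(N.arc_mem _ _ h2').2, h2'⟩
  have hcard : ({c1, c2} : Finset ℕ).card = 2 := by
    rw [Finset.card_insert_of_notMem (by simpa using hp), Finset.card_singleton]
  have heq : N.verts.filter (fun w => N.arc v w = true) = {c1, c2} :=
    (Finset.eq_of_subset_of_card_le hsub (by rw [hcard]; exact le_of_eq h2)).symm
  have hma : a ∈ N.verts.filter (fun w => N.arc v w = true) :=
    Finset.mem_filter.mpr ⟨(N.arc_mem _ _ ha).2, ha⟩
  rw [heq] at hma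
  simpa using hma

lemma outdeg_pos_of_internal {N : Network} {v : ℕ} (hv : v ∈ N.verts)
    (hr : v ≠ N.root) (hl : ¬ IsLeaf N v) : 1 ≤ outDeg N v := by
  rcases N.nonroot_deg v hv hr with ⟨h1, h2⟩ | ⟨h1, h2⟩ | ⟨h1, h2⟩
  · unfold outDeg; omega
  · unfold outDeg; omega
  · exact absurd ⟨hv, h1, h2⟩ hl

lemma outdeg_pos_child {N : Network} {v : ℕ} (h : 1 ≤ outDeg N v) :
    ∃ c, N.arc v c = true := by
  have h' : 0 < (N.verts.filter fun w => N.arc v w = true).card := h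
  obtain ⟨c, hc⟩ := Finset.card_pos.mp h'
  exact ⟨c, (Finset.mem_filter.mp hc).2⟩

lemma restrict_leafAdd {N N' : Network} (h : IsLeafAddition N N') (t : ℕ → ℝ)
    (ht : IsNonTemporal N' t) :
    IsNonTemporal N t ∧ inretCount N t ≤ inretCount N' t + 1 := by
  obtain ⟨u, v, huv, w, x, hw, hx, hwx, hverts, hroot, harc⟩ := h
  have hu : u ∈ N.verts := (N.arc_mem _ _ huv).1
  have hv : v ∈ N.verts := (N.arc_mem _ _ huv).2
  have huw : u ≠ w := fun h => hw (h ▸ hu)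
  have hux : u ≠ x := fun h => hx (h ▸ hu)
  have hvw : v ≠ w := fun h => hw (h ▸ hv)
  have hvx : v ≠ x := fun h => hx (h ▸ hv)
  have hmem' : ∀ a ∈ N.verts, a ∈ N'.verts := by
    intro a ha; rw [hverts]; simp [ha]
  have a_uw : N'.arc u w = true := (harc u w).mpr (Or.inr (Or.inl ⟨rfl, rfl⟩))
  have a_wv : N'.arc w v = true := (harc w v).mpr (Or.inr (Or.inr (Or.inl ⟨rfl, rfl⟩)))
  have hsurv : ∀ a b, N.arc a b = true → ¬(a = u ∧ b = v) → N'.arc a b = true := by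
    intro a b hab hne; exact (harc a b).mpr (Or.inl ⟨hab, hne⟩)
  -- indegree preservation
  have hind : ∀ b ∈ N.verts, inDeg N' b = inDeg N b := by
    intro b hb
    have hbw : b ≠ w := fun h => hw (h ▸ hb)
    have hbx : b ≠ x := fun h => hx (h ▸ hb)
    by_cases hbv : b = v
    · subst hbv
      have hfe : N'.verts.filter (fun a => N'.arc a b = true)
          = insert w ((N.verts.filter (fun a => N.arc a b = true)).erase u) := by
        ext a
        simp only [Finset.mem_filter, Finset.mem_insert, Finset.mem_erase, hverts]
        constructor
        · rintro ⟨hmem, harc'⟩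
          rcases (harc a b).mp harc' with ⟨hab, hne⟩ | ⟨ha, hb'⟩ | ⟨ha, hb'⟩ | ⟨ha, hb'⟩
          · exact Or.inr ⟨fun h => hne ⟨h, rfl⟩, (N.arc_mem _ _ hab).1, hab⟩
          · exact absurd hb' hvw
          · exact Or.inl ha
          · exact absurd hb' hvx
        · rintro (rfl | ⟨hau, hmem, hab⟩)
          · exact ⟨Or.inl rfl, a_wv⟩
          · exact ⟨Or.inr (Or.inr hmem), (harc a b).mpr (Or.inl ⟨hab, fun hc => hau hc.1⟩)⟩
      have humem : u ∈ N.verts.filter (fun a => N.arc a b = true) :=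
        Finset.mem_filter.mpr ⟨hu, huv⟩
      have hpos : 0 < (N.verts.filter (fun a => N.arc a b = true)).card :=
        Finset.card_pos.mpr ⟨u, humem⟩
      have hwnot : w ∉ (N.verts.filter (fun a => N.arc a b = true)).erase u := by
        intro hmem
        exact hw (Finset.mem_filter.mp (Finset.mem_of_mem_erase hmem)).1
      unfold inDeg
      rw [hfe, Finset.card_insert_of_notMem hwnot, Finset.card_erase_of_mem humem]
      omega
    · have hfe : N'.verts.filter (fun a => N'.arc a b = true)
          = N.verts.filter (fun a => N.arc a b = true) := by
        ext a
        simp only [Finset.mem_filter, hverts, Finset.mem_insert]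
        constructor
        · rintro ⟨hmem, harc'⟩
          rcases (harc a b).mp harc' with ⟨hab, hne⟩ | ⟨ha, hb'⟩ | ⟨ha, hb'⟩ | ⟨ha, hb'⟩
          · exact ⟨(N.arc_mem _ _ hab).1, hab⟩
          · exact absurd hb' hbw
          · exact absurd hb' hbv
          · exact absurd hb' hbx
        · rintro ⟨hmem, hab⟩
          exact ⟨Or.inr (Or.inr hmem), (harc a b).mpr (Or.inl ⟨hab, fun hc => hbv hc.2⟩)⟩
      unfold inDeg
      rw [hfe]
  have hret : ∀ b ∈ N.verts, (IsRet N b ↔ IsRet N' b) := by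
    intro b hb
    constructor
    · intro h; exact ⟨hmem' b hb, by rw [hind b hb]; exact h.2⟩
    · intro h; exact ⟨hb, by rw [← hind b hb]; exact h.2⟩
  have hwret : ¬ IsRet N' w := by
    rintro ⟨-, h2⟩
    have hfe : N'.verts.filter (fun a => N'.arc a w = true) = {u} := by
      ext a
      simp only [Finset.mem_filter, hverts, Finset.mem_insert, Finset.mem_singleton]
      constructor
      · rintro ⟨hmem, harc'⟩
        rcases (harc a w).mp harc' with ⟨hab, -⟩ | ⟨ha, -⟩ | ⟨-, hb'⟩ | ⟨-, hb'⟩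
        · exact absurd ((N.arc_mem _ _ hab).2) hw
        · exact ha
        · exact absurd hb'.symm hvw
        · exact absurd hb' hwx
      · rintro rfl
        exact ⟨Or.inr (Or.inr hu), a_uw⟩
    unfold inDeg at h2
    rw [hfe] at h2
    simp at h2
  have htuw : t u < t w :=
    lt_of_le_of_ne (ht.1 u w a_uw) (fun he => hwret (ht.2.1 u w a_uw he))
  have htwv : t w ≤ t v := ht.1 w v a_wv
  have htuv : t u < t v := lt_of_lt_of_le htuw htwv
  have hNT : IsNonTemporal N t := by
    refine ⟨?_, ?_, ?_, ?_⟩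
    · intro a b hab
      by_cases hc : a = u ∧ b = v
      · obtain ⟨rfl, rfl⟩ := hc; exact le_of_lt htuv
      · exact ht.1 a b (hsurv a b hab hc)
    · intro a b hab he
      by_cases hc : a = u ∧ b = v
      · obtain ⟨rfl, rfl⟩ := hc; exact absurd he (ne_of_lt htuv)
      · exact (hret b (N.arc_mem _ _ hab).2).mpr (ht.2.1 a b (hsurv a b hab hc) he)
    · intro a ha
      obtain ⟨hav, har, hal⟩ := ha
      obtain ⟨c, hc⟩ := outdeg_pos_child (outdeg_pos_of_internal hav har hal)
      have harc2 : ∃ d, N'.arc a d = true := by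
        by_cases hcc : a = u ∧ c = v
        · exact ⟨w, hcc.1 ▸ a_uw⟩
        · exact ⟨c, hsurv a c hc hcc⟩
      obtain ⟨d, hd⟩ := harc2
      have hnl : ¬ IsLeaf N' a := fun hl => leaf_no_out hl hd
      obtain ⟨c', hc', hlt⟩ := ht.2.2.1 a ⟨hmem' a hav, by rw [hroot]; exact har, hnl⟩
      rcases (harc a c').mp hc' with ⟨hab, -⟩ | ⟨ha', hc'w⟩ | ⟨haw, -⟩ | ⟨haw, -⟩
      · exact ⟨c', hab, hlt⟩
      · subst ha'; subst hc'w
        exact ⟨v, huv, lt_of_lt_of_le hlt htwv⟩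
      · exact absurd haw (fun h => hw (h ▸ hav))
      · exact absurd haw (fun h => hw (h ▸ hav))
    · intro r a b hr har hbr hab he
      obtain ⟨hea, heb⟩ := he
      by_cases hrv : r = v
      · subst hrv
        have hnu : ∀ s, N.arc s r = true → t s = t r → s ≠ u := by
          intro s hs he' hsu; subst hsu; linarith
        have ha' := hsurv a r har (fun hc => hnu a har hea hc.1)
        have hb' := hsurv b r hbr (fun hc => hnu b hbr heb hc.1)
        exact ht.2.2.2 r a b ((hret r hv).mp hr) ha' hb' hab ⟨hea, heb⟩
      · have ha' := hsurv a r har (fun hc => hrv hc.2)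
        have hb' := hsurv b r hbr (fun hc => hrv hc.2)
        exact ht.2.2.2 r a b ((hret r hr.1).mp hr) ha' hb' hab ⟨hea, heb⟩
  refine ⟨hNT, ?_⟩
  have hsub2 : {r : ℕ | Inret N t r} ⊆ insert v {r : ℕ | Inret N' t r} := by
    intro r hr
    obtain ⟨hrret, hpar⟩ := hr
    by_cases hrv : r = v
    · exact Set.mem_insert_iff.mpr (Or.inl hrv)
    · refine Set.mem_insert_iff.mpr (Or.inr ⟨(hret r hrret.1).mp hrret, ?_⟩)
      intro a ha'
      rcases (harc a r).mp ha' with ⟨hab, -⟩ | ⟨-, hrw⟩ | ⟨-, hrv'⟩ | ⟨-, hrx⟩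
      · exact hpar a hab
      · exact absurd hrw (fun h => hw (h ▸ hrret.1))
      · exact absurd hrv' hrv
      · exact absurd hrx (fun h => hx (h ▸ hrret.1))
  have hfin : {r : ℕ | Inret N' t r}.Finite :=
    Set.Finite.subset N'.verts.finite_toSet (fun r hr => hr.1.1)
  calc inretCount N t ≤ (insert v {r : ℕ | Inret N' t r}).ncard :=
        Set.ncard_le_ncard hsub2 (hfin.insert v)
    _ ≤ inretCount N' t + 1 := Set.ncard_insert_le v _

lemma singleLeaf_HGT (N : Network) (h : IsSingleLeaf N) :
    ∃ t : ℕ → ℝ, IsHGTConsistent N t := by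
  obtain ⟨x, hxr, hverts⟩ := h
  have harc : ∀ a b, N.arc a b = true → a = N.root ∧ b = x := by
    intro a b hab
    obtain ⟨ha, hb⟩ := N.arc_mem _ _ hab
    rw [hverts] at ha hb
    simp only [Finset.mem_insert, Finset.mem_singleton] at ha hb
    rcases hb with rfl | rfl
    · exact (root_no_in hab).elim
    · rcases ha with rfl | rfl
      · exact ⟨rfl, rfl⟩
      · exact absurd hab (arc_irrefl N _)
  have hnoret : ∀ r, ¬ IsRet N r := by
    rintro r ⟨hr, h2⟩
    have hsub : N.verts.filter (fun u => N.arc u r = true) ⊆ {N.root} := by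
      intro a ha
      obtain ⟨-, hab⟩ := Finset.mem_filter.mp ha
      simpa using (harc a r hab).1
    have hle := Finset.card_le_card hsub
    simp only [Finset.card_singleton] at hle
    unfold inDeg at h2
    omega
  have hrx : N.arc N.root x = true := by
    have hpos : 0 < (N.verts.filter fun w => N.arc N.root w = true).card := by
      rw [N.root_outdeg]; norm_num
    obtain ⟨c, hc⟩ := Finset.card_pos.mp hpos
    obtain ⟨-, hc'⟩ := Finset.mem_filter.mp hc
    rcases harc _ _ hc' with ⟨-, rfl⟩
    exact hc'
  have hleafx : IsLeaf N x := by
    refine ⟨by rw [hverts]; simp, ?_, ?_⟩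
    · have hfe : N.verts.filter (fun u => N.arc u x = true) = {N.root} := by
        ext a
        simp only [Finset.mem_filter, Finset.mem_singleton]
        constructor
        · rintro ⟨-, hab⟩; exact (harc a x hab).1
        · rintro rfl; exact ⟨N.root_mem, hrx⟩
      unfold inDeg; rw [hfe]; simp
    · have hfe : N.verts.filter (fun w => N.arc x w = true) = ∅ := by
        ext b
        simp only [Finset.mem_filter, Finset.notMem_empty, iff_false, not_and]
        intro _ hab
        exact absurd (harc x b hab).1 hxr
      unfold outDeg; rw [hfe]; simp
  refine ⟨fun n => if n = N.root then 0 else 1, ⟨?_, ?_, ?_, ?_⟩, ?_⟩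
  · intro a b hab
    obtain ⟨rfl, rfl⟩ := harc a b hab
    simp [hxr]
  · intro a b hab he
    obtain ⟨rfl, rfl⟩ := harc a b hab
    simp [hxr] at he
  · rintro u2 ⟨hu2, hur, hul⟩
    rw [hverts] at hu2
    simp only [Finset.mem_insert, Finset.mem_singleton] at hu2
    rcases hu2 with rfl | rfl
    · exact absurd rfl hur
    · exact absurd hleafx hul
  · intro r a b hr
    exact absurd hr (hnoret r)
  · intro r hr
    exact absurd hr (hnoret r)

lemma pullback_cherry {A B : Network} {x y : ℕ} (h : ReducesCherry A B x y)
    (t' : ℕ → ℝ) (ht : IsHGTConsistent B t') : ∃ t : ℕ → ℝ, IsHGTConsistent A t := by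
  obtain ⟨p, q, hlx, hly, hxy, hpx, hpy, hqp, hverts, hroot, harc⟩ := h
  have hpA : p ∈ A.verts := (A.arc_mem _ _ hpx).1
  have hqA : q ∈ A.verts := (A.arc_mem _ _ hqp).1
  have hxA : x ∈ A.verts := hlx.1
  have hyA : y ∈ A.verts := hly.1
  have hpx' : p ≠ x := arc_ne hpx
  have hpy' : p ≠ y := arc_ne hpy
  have hqp' : q ≠ p := arc_ne hqp
  have hproot : p ≠ A.root := ne_root_of_parent hqp
  have hqx : q ≠ x := fun h => leaf_no_out hlx (h ▸ hqp)
  have hqy : q ≠ y := fun h => leaf_no_out hly (h ▸ hqp)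
  have hpdeg : inDeg A p = 1 ∧ outDeg A p = 2 := by
    rcases A.nonroot_deg p hpA hproot with ⟨h1, h2⟩ | ⟨h1, h2⟩ | ⟨h1, h2⟩
    · exact ⟨h1, h2⟩
    · exact absurd (outdeg_one_child (v := p) h2 hpx hpy) hxy
    · exfalso
      have hm : x ∈ A.verts.filter (fun w => A.arc p w = true) :=
        Finset.mem_filter.mpr ⟨hxA, hpx⟩
      have := Finset.card_pos.mpr ⟨x, hm⟩
      omega
  have hchild : ∀ c, A.arc p c = true → c = x ∨ c = y :=
    fun c hc => outdeg_two_children hpdeg.2 hxy hpx hpy hc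
  have hparp : ∀ a, A.arc a p = true → a = q :=
    fun a ha => indeg_one_parent hpdeg.1 ha hqp
  have hparx : ∀ a, A.arc a x = true → a = p :=
    fun a ha => indeg_one_parent hlx.2.1 ha hpx
  have hpary : ∀ a, A.arc a y = true → a = p :=
    fun a ha => indeg_one_parent hly.2.1 ha hpy
  have hqB : q ∈ B.verts := by
    rw [hverts]; exact Finset.mem_erase.mpr ⟨hqp', Finset.mem_erase.mpr ⟨hqx, hqA⟩⟩
  have hyB : y ∈ B.verts := by
    rw [hverts]
    exact Finset.mem_erase.mpr ⟨Ne.symm hpy', Finset.mem_erase.mpr ⟨Ne.symm hxy, hyA⟩⟩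
  have b_qy : B.arc q y = true := (harc q y).mpr (Or.inr ⟨rfl, rfl⟩)
  have hyret : ¬ IsRet B y := by
    rintro ⟨-, h2⟩
    have hfe : B.verts.filter (fun a => B.arc a y = true) = {q} := by
      ext a
      simp only [Finset.mem_filter, Finset.mem_singleton]
      constructor
      · rintro ⟨-, hab⟩
        rcases (harc a y).mp hab with ⟨hab', hap, -, -⟩ | ⟨rfl, -⟩
        · exact absurd (hpary a hab') hap
        · rfl
      · rintro rfl; exact ⟨hqB, b_qy⟩
    unfold inDeg at h2; rw [hfe] at h2; simp at h2
  have htqy : t' q < t' y :=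
    lt_of_le_of_ne (ht.1.1 q y b_qy) (fun he => hyret (ht.1.2.1 q y b_qy he))
  obtain ⟨m, hm1, hm2⟩ := exists_between htqy
  obtain ⟨t, ht_p, ht_x, ht_other⟩ :
      ∃ t : ℕ → ℝ, t p = m ∧ t x = t' y ∧ ∀ a, a ≠ p → a ≠ x → t a = t' a := by
    refine ⟨fun n => if n = p then m else if n = x then t' y else t' n, by simp, ?_, ?_⟩
    · simp [Ne.symm hpx']
    · intro a h1 h2; simp [h1, h2]
  have harcA : ∀ a b, A.arc a b = true →
      (a = p ∧ b = x) ∨ (a = p ∧ b = y) ∨ (a = q ∧ b = p) ∨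
      (a ≠ p ∧ a ≠ x ∧ a ≠ y ∧ b ≠ p ∧ b ≠ x ∧ B.arc a b = true) := by
    intro a b hab
    by_cases hap : a = p
    · subst hap
      rcases hchild b hab with rfl | rfl
      · exact Or.inl ⟨rfl, rfl⟩
      · exact Or.inr (Or.inl ⟨rfl, rfl⟩)
    by_cases hbp : b = p
    · subst hbp; exact Or.inr (Or.inr (Or.inl ⟨hparp a hab, rfl⟩))
    have hax : a ≠ x := fun h => leaf_no_out hlx (h ▸ hab)
    have hay : a ≠ y := fun h => leaf_no_out hly (h ▸ hab)
    have hbx : b ≠ x := fun h => hap (hparx a (h ▸ hab))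
    exact Or.inr (Or.inr (Or.inr ⟨hap, hax, hay, hbp, hbx,
      (harc a b).mpr (Or.inl ⟨hab, hap, hbp, hbx⟩)⟩))
  have hparents : ∀ r a, r ≠ p → r ≠ x → r ≠ y →
      (A.arc a r = true ↔ B.arc a r = true) := by
    intro r a h1 h2 h3
    constructor
    · intro hab
      rcases harcA a r hab with ⟨-, hb⟩ | ⟨-, hb⟩ | ⟨-, hb⟩ | ⟨-,-,-,-,-,hB⟩
      · exact absurd hb h2
      · exact absurd hb h3
      · exact absurd hb h1
      · exact hB
    · intro hab
      rcases (harc a r).mp hab with ⟨hab', -, -, -⟩ | ⟨-, hb⟩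
      · exact hab'
      · exact absurd hb h3
  have hparne : ∀ r s, r ≠ x → r ≠ y → A.arc s r = true → s ≠ p ∧ s ≠ x := by
    intro r s h2 h3 hs
    constructor
    · rintro rfl
      rcases hchild r hs with rfl | rfl
      · exact h2 rfl
      · exact h3 rfl
    · rintro rfl
      exact leaf_no_out hlx hs
  have hindAB : ∀ r, r ≠ p → r ≠ x → r ≠ y → inDeg A r = inDeg B r := by
    intro r h1 h2 h3
    have hfe : B.verts.filter (fun a => B.arc a r = true)
        = A.verts.filter (fun a => A.arc a r = true) := by
      ext a
      simp only [Finset.mem_filter, hverts, Finset.mem_erase]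
      constructor
      · rintro ⟨⟨-, -, haA⟩, hab⟩
        exact ⟨haA, (hparents r a h1 h2 h3).mpr hab⟩
      · rintro ⟨haA, hab⟩
        obtain ⟨hap2, hax2⟩ := hparne r a h2 h3 hab
        exact ⟨⟨hap2, hax2, haA⟩, (hparents r a h1 h2 h3).mp hab⟩
    unfold inDeg
    rw [hfe]
  have hretAB : ∀ r, r ≠ p → r ≠ x → r ≠ y → (IsRet A r ↔ IsRet B r) := by
    intro r h1 h2 h3
    constructor
    · intro h
      refine ⟨by rw [hverts]; exact Finset.mem_erase.mpr ⟨h1, Finset.mem_erase.mpr ⟨h2, h.1⟩⟩, ?_⟩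
      rw [← hindAB r h1 h2 h3]; exact h.2
    · intro h
      have hmem := h.1
      rw [hverts] at hmem
      exact ⟨(Finset.mem_erase.mp (Finset.mem_erase.mp hmem).2).2,
        by rw [hindAB r h1 h2 h3]; exact h.2⟩
  have hretnot : ∀ r, IsRet A r → r ≠ p ∧ r ≠ x ∧ r ≠ y := by
    rintro r ⟨-, h2⟩
    refine ⟨?_, ?_, ?_⟩ <;> rintro rfl
    · have := hpdeg.1; omega
    · have := hlx.2.1; omega
    · have := hly.2.1; omega
  have hty : t y = t' y := ht_other y (Ne.symm hpy') (Ne.symm hxy)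
  have htq : t q = t' q := ht_other q hqp' hqx
  refine ⟨t, ⟨?_, ?_, ?_, ?_⟩, ?_⟩
  · intro a b hab
    rcases harcA a b hab with ⟨rfl, rfl⟩ | ⟨rfl, rfl⟩ | ⟨rfl, rfl⟩ | ⟨h1,h2,h3,h4,h5,hB⟩
    · rw [ht_p, ht_x]; exact le_of_lt hm2
    · rw [ht_p, hty]; exact le_of_lt hm2
    · rw [htq, ht_p]; exact le_of_lt hm1
    · rw [ht_other a h1 h2, ht_other b h4 h5]; exact ht.1.1 a b hB
  · intro a b hab he
    rcases harcA a b hab with ⟨rfl, rfl⟩ | ⟨rfl, rfl⟩ | ⟨rfl, rfl⟩ | ⟨h1,h2,h3,h4,h5,hB⟩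
    · rw [ht_p, ht_x] at he; exact absurd he (ne_of_lt hm2)
    · rw [ht_p, hty] at he; exact absurd he (ne_of_lt hm2)
    · rw [htq, ht_p] at he; exact absurd he (ne_of_lt hm1)
    · rw [ht_other a h1 h2, ht_other b h4 h5] at he
      have hby : b ≠ y := fun hh => h1 (hpary a (hh ▸ hab))
      exact (hretAB b h4 h5 hby).mpr (ht.1.2.1 a b hB he)
  · rintro a ⟨haA, har, hal⟩
    by_cases hap : a = p
    · subst hap
      exact ⟨y, hpy, by rw [ht_p, hty]; exact hm2⟩
    have hax : a ≠ x := fun hh => hal (by rw [hh]; exact hlx)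
    have haB : a ∈ B.verts := by
      rw [hverts]; exact Finset.mem_erase.mpr ⟨hap, Finset.mem_erase.mpr ⟨hax, haA⟩⟩
    obtain ⟨c, hc⟩ := outdeg_pos_child (outdeg_pos_of_internal haA har hal)
    have harcB2 : ∃ d, B.arc a d = true := by
      rcases harcA a c hc with ⟨rfl, -⟩ | ⟨rfl, -⟩ | ⟨rfl, rfl⟩ | ⟨-,-,-,-,-,hB⟩
      · exact absurd rfl hap
      · exact absurd rfl hap
      · exact ⟨y, b_qy⟩
      · exact ⟨c, hB⟩
    obtain ⟨d, hd⟩ := harcB2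
    have hnl : ¬ IsLeaf B a := fun hl => leaf_no_out hl hd
    obtain ⟨c', hc', hlt⟩ := ht.1.2.2.1 a ⟨haB, by rw [hroot]; exact har, hnl⟩
    rcases (harc a c').mp hc' with ⟨hab', hap2, hcp, hcx⟩ | ⟨rfl, rfl⟩
    · refine ⟨c', hab', ?_⟩
      rw [ht_other a hap hax, ht_other c' hcp hcx]
      exact hlt
    · refine ⟨p, hqp, ?_⟩
      rw [htq, ht_p]
      exact hm1
  · intro r a b hr har hbr hab he
    obtain ⟨hea, heb⟩ := he
    obtain ⟨hrp, hrx, hry⟩ := hretnot r hr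
    have haB := (hparents r a hrp hrx hry).mp har
    have hbB := (hparents r b hrp hrx hry).mp hbr
    have htr : t r = t' r := ht_other r hrp hrx
    obtain ⟨hap2, hax2⟩ := hparne r a hrx hry har
    obtain ⟨hbp2, hbx2⟩ := hparne r b hrx hry hbr
    rw [htr, ht_other a hap2 hax2] at hea
    rw [htr, ht_other b hbp2 hbx2] at heb
    exact ht.1.2.2.2 r a b ((hretAB r hrp hrx hry).mp hr) haB hbB hab ⟨hea, heb⟩
  · intro r hr
    obtain ⟨hrp, hrx, hry⟩ := hretnot r hr
    obtain ⟨u0, ⟨hu0B, hu0e⟩, huniq⟩ := ht.2 r ((hretAB r hrp hrx hry).mp hr)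
    have hu0A := (hparents r u0 hrp hrx hry).mpr hu0B
    obtain ⟨hu0p, hu0x⟩ := hparne r u0 hrx hry hu0A
    refine ⟨u0, ⟨hu0A, ?_⟩, ?_⟩
    · rw [ht_other u0 hu0p hu0x, ht_other r hrp hrx]; exact hu0e
    · rintro s ⟨hsA, hse⟩
      obtain ⟨hsp, hsx⟩ := hparne r s hrx hry hsA
      refine huniq s ⟨(hparents r s hrp hrx hry).mp hsA, ?_⟩
      rw [← ht_other s hsp hsx, ← ht_other r hrp hrx]; exact hse

lemma pullback_retcherry {A B : Network} {x y : ℕ} (h : ReducesRetCherry A B x y)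
    (t' : ℕ → ℝ) (ht : IsHGTConsistent B t') : ∃ t : ℕ → ℝ, IsHGTConsistent A t := by
  obtain ⟨px, py, z, q, hlx, hly, hretpx, hpxx, hpypx, hpyy, hzpx, hzpy, hqpy,
    hverts, hroot, harc⟩ := h
  have hpxA : px ∈ A.verts := hretpx.1
  have hpyA : py ∈ A.verts := (A.arc_mem _ _ hpypx).1
  have hzA : z ∈ A.verts := (A.arc_mem _ _ hzpx).1
  have hqA : q ∈ A.verts := (A.arc_mem _ _ hqpy).1
  have hxA : x ∈ A.verts := hlx.1
  have hyA : y ∈ A.verts := hly.1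
  have hpx_x : px ≠ x := arc_ne hpxx
  have hpy_px : py ≠ px := arc_ne hpypx
  have hpy_y : py ≠ y := arc_ne hpyy
  have hz_px : z ≠ px := arc_ne hzpx
  have hq_py : q ≠ py := arc_ne hqpy
  have hpxroot : px ≠ A.root := ne_root_of_parent hzpx
  have hpyroot : py ≠ A.root := ne_root_of_parent hqpy
  have hpx_y : px ≠ y := by
    rintro rfl
    have h1 := hretpx.2
    have h2 := hly.2.1
    omega
  have hpy_x : py ≠ x := fun h => leaf_no_out hlx (h ▸ hpypx)
  have hq_x : q ≠ x := fun h => leaf_no_out hlx (h ▸ hqpy)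
  have hq_y : q ≠ y := fun h => leaf_no_out hly (h ▸ hqpy)
  have hz_x : z ≠ x := fun h => leaf_no_out hlx (h ▸ hzpx)
  have hz_y : z ≠ y := fun h => leaf_no_out hly (h ▸ hzpx)
  have hparx : ∀ a, A.arc a x = true → a = px :=
    fun a ha => indeg_one_parent hlx.2.1 ha hpxx
  have hpary : ∀ a, A.arc a y = true → a = py :=
    fun a ha => indeg_one_parent hly.2.1 ha hpyy
  have hx_y : x ≠ y := by
    rintro rfl
    exact hpy_px (hparx py hpyy)
  have hpxdeg : outDeg A px = 1 := by
    rcases A.nonroot_deg px hpxA hpxroot with ⟨h1, h2⟩ | ⟨h1, h2⟩ | ⟨h1, h2⟩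
    · have := hretpx.2; unfold inDeg at this; omega
    · exact h2
    · have := hretpx.2; unfold inDeg at this; omega
  have hchildpx : ∀ c, A.arc px c = true → c = x :=
    fun c hc => outdeg_one_child hpxdeg hc hpxx
  have hparpx : ∀ a, A.arc a px = true → a = py ∨ a = z :=
    fun a ha => indeg_two_parents hretpx.2 (Ne.symm hzpy) hpypx hzpx ha
  have hq_px : q ≠ px := by
    rintro rfl
    exact hpy_x (hchildpx py hqpy)
  have hpydeg : inDeg A py = 1 ∧ outDeg A py = 2 := by
    rcases A.nonroot_deg py hpyA hpyroot with ⟨h1, h2⟩ | ⟨h1, h2⟩ | ⟨h1, h2⟩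
    · exact ⟨h1, h2⟩
    · exact absurd (outdeg_one_child (v := py) h2 hpypx hpyy) hpx_y
    · exfalso
      have hm : px ∈ A.verts.filter (fun w => A.arc py w = true) :=
        Finset.mem_filter.mpr ⟨hpxA, hpypx⟩
      have := Finset.card_pos.mpr ⟨px, hm⟩
      omega
  have hchildpy : ∀ c, A.arc py c = true → c = px ∨ c = y :=
    fun c hc => outdeg_two_children hpydeg.2 hpx_y hpypx hpyy hc
  have hparpy : ∀ a, A.arc a py = true → a = q :=
    fun a ha => indeg_one_parent hpydeg.1 ha hqpy
  have hmemB : ∀ a, a ∈ A.verts → a ≠ px → a ≠ py → a ∈ B.verts := by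
    intro a ha h1 h2
    rw [hverts]
    exact Finset.mem_erase.mpr ⟨h2, Finset.mem_erase.mpr ⟨h1, ha⟩⟩
  have hzB : z ∈ B.verts := hmemB z hzA hz_px hzpy
  have hqB : q ∈ B.verts := hmemB q hqA hq_px hq_py
  have hxB : x ∈ B.verts := hmemB x hxA (Ne.symm hpx_x) (Ne.symm hpy_x)
  have hyB : y ∈ B.verts := hmemB y hyA (Ne.symm hpx_y) (Ne.symm hpy_y)
  have b_zx : B.arc z x = true := (harc z x).mpr (Or.inr (Or.inl ⟨rfl, rfl⟩))
  have b_qy : B.arc q y = true := (harc q y).mpr (Or.inr (Or.inr ⟨rfl, rfl⟩))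
  have hxret : ¬ IsRet B x := by
    rintro ⟨-, h2⟩
    have hfe : B.verts.filter (fun a => B.arc a x = true) = {z} := by
      ext a
      simp only [Finset.mem_filter, Finset.mem_singleton]
      constructor
      · rintro ⟨-, hab⟩
        rcases (harc a x).mp hab with ⟨hab', hap, -, -, -⟩ | ⟨rfl, -⟩ | ⟨-, hb⟩
        · exact absurd (hparx a hab') hap
        · rfl
        · exact absurd hb hx_y
      · rintro rfl; exact ⟨hzB, b_zx⟩
    unfold inDeg at h2; rw [hfe] at h2; simp at h2
  have hyret : ¬ IsRet B y := by
    rintro ⟨-, h2⟩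
    have hfe : B.verts.filter (fun a => B.arc a y = true) = {q} := by
      ext a
      simp only [Finset.mem_filter, Finset.mem_singleton]
      constructor
      · rintro ⟨-, hab⟩
        rcases (harc a y).mp hab with ⟨hab', -, hap, -, -⟩ | ⟨-, hb⟩ | ⟨rfl, -⟩
        · exact absurd (hpary a hab') hap
        · exact absurd hb (Ne.symm hx_y)
        · rfl
      · rintro rfl; exact ⟨hqB, b_qy⟩
    unfold inDeg at h2; rw [hfe] at h2; simp at h2
  have htzx : t' z < t' x :=
    lt_of_le_of_ne (ht.1.1 z x b_zx) (fun he => hxret (ht.1.2.1 z x b_zx he))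
  have htqy : t' q < t' y :=
    lt_of_le_of_ne (ht.1.1 q y b_qy) (fun he => hyret (ht.1.2.1 q y b_qy he))
  set c : ℝ := max (t' z) (t' q) + 1 with hcdef
  have hcz : t' z < c := by
    have := le_max_left (t' z) (t' q); rw [hcdef]; linarith
  have hcq : t' q < c := by
    have := le_max_right (t' z) (t' q); rw [hcdef]; linarith
  obtain ⟨t, ht_px, ht_py, ht_x, ht_y, ht_other⟩ :
      ∃ t : ℕ → ℝ, t px = c ∧ t py = c ∧ t x = c + 1 ∧ t y = c + 2 ∧
        ∀ a, a ≠ px → a ≠ py → a ≠ x → a ≠ y → t a = t' a := by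
    refine ⟨fun n => if n = px then c else if n = py then c else
      if n = x then c + 1 else if n = y then c + 2 else t' n, by simp, ?_, ?_, ?_, ?_⟩
    · simp [hpy_px]
    · simp [Ne.symm hpx_x, Ne.symm hpy_x]
    · simp [Ne.symm hpx_y, Ne.symm hpy_y, Ne.symm hx_y]
    · intro a h1 h2 h3 h4; simp [h1, h2, h3, h4]
  have harcA : ∀ a b, A.arc a b = true →
      (a = px ∧ b = x) ∨ (a = py ∧ b = px) ∨ (a = py ∧ b = y) ∨
      (a = z ∧ b = px) ∨ (a = q ∧ b = py) ∨
      (a ≠ px ∧ a ≠ py ∧ a ≠ x ∧ a ≠ y ∧ b ≠ px ∧ b ≠ py ∧ b ≠ x ∧ b ≠ y ∧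
        B.arc a b = true) := by
    intro a b hab
    by_cases h1 : a = px
    · subst h1; exact Or.inl ⟨rfl, hchildpx b hab⟩
    by_cases h2 : a = py
    · subst h2
      rcases hchildpy b hab with rfl | rfl
      · exact Or.inr (Or.inl ⟨rfl, rfl⟩)
      · exact Or.inr (Or.inr (Or.inl ⟨rfl, rfl⟩))
    by_cases h3 : b = px
    · subst h3
      rcases hparpx a hab with rfl | rfl
      · exact absurd rfl h2
      · exact Or.inr (Or.inr (Or.inr (Or.inl ⟨rfl, rfl⟩)))
    by_cases h4 : b = py
    · subst h4; exact Or.inr (Or.inr (Or.inr (Or.inr (Or.inl ⟨hparpy a hab, rfl⟩))))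
    have hax : a ≠ x := fun h => leaf_no_out hlx (h ▸ hab)
    have hay : a ≠ y := fun h => leaf_no_out hly (h ▸ hab)
    have hbx : b ≠ x := fun h => h1 (hparx a (h ▸ hab))
    have hby : b ≠ y := fun h => h2 (hpary a (h ▸ hab))
    exact Or.inr (Or.inr (Or.inr (Or.inr (Or.inr ⟨h1, h2, hax, hay, h3, h4, hbx, hby,
      (harc a b).mpr (Or.inl ⟨hab, h1, h2, h3, h4⟩)⟩))))
  have hparents : ∀ r a, r ≠ px → r ≠ py → r ≠ x → r ≠ y →
      (A.arc a r = true ↔ B.arc a r = true) := by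
    intro r a h1 h2 h3 h4
    constructor
    · intro hab
      rcases harcA a r hab with ⟨-, hb⟩ | ⟨-, hb⟩ | ⟨-, hb⟩ | ⟨-, hb⟩ | ⟨-, hb⟩ |
        ⟨-,-,-,-,-,-,-,-,hB⟩
      · exact absurd hb h3
      · exact absurd hb h1
      · exact absurd hb h4
      · exact absurd hb h1
      · exact absurd hb h2
      · exact hB
    · intro hab
      rcases (harc a r).mp hab with ⟨hab', -, -, -, -⟩ | ⟨-, hb⟩ | ⟨-, hb⟩
      · exact hab'
      · exact absurd hb h3
      · exact absurd hb h4
  have hparne : ∀ r s, r ≠ px → r ≠ py → r ≠ x → r ≠ y → A.arc s r = true →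
      s ≠ px ∧ s ≠ py ∧ s ≠ x ∧ s ≠ y := by
    intro r s h1 h2 h3 h4 hs
    refine ⟨?_, ?_, ?_, ?_⟩
    · rintro rfl; exact h3 (hchildpx r hs)
    · rintro rfl
      rcases hchildpy r hs with rfl | rfl
      · exact h1 rfl
      · exact h4 rfl
    · rintro rfl; exact leaf_no_out hlx hs
    · rintro rfl; exact leaf_no_out hly hs
  have hindAB : ∀ r, r ≠ px → r ≠ py → r ≠ x → r ≠ y → inDeg A r = inDeg B r := by
    intro r h1 h2 h3 h4
    have hfe : B.verts.filter (fun a => B.arc a r = true)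
        = A.verts.filter (fun a => A.arc a r = true) := by
      ext a
      simp only [Finset.mem_filter, hverts, Finset.mem_erase]
      constructor
      · rintro ⟨⟨-, -, haA⟩, hab⟩
        exact ⟨haA, (hparents r a h1 h2 h3 h4).mpr hab⟩
      · rintro ⟨haA, hab⟩
        obtain ⟨ha1, ha2, -, -⟩ := hparne r a h1 h2 h3 h4 hab
        exact ⟨⟨ha2, ha1, haA⟩, (hparents r a h1 h2 h3 h4).mp hab⟩
    unfold inDeg
    rw [hfe]
  have hretAB : ∀ r, r ≠ px → r ≠ py → r ≠ x → r ≠ y → (IsRet A r ↔ IsRet B r) := by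
    intro r h1 h2 h3 h4
    constructor
    · intro h
      exact ⟨hmemB r h.1 h1 h2, by rw [← hindAB r h1 h2 h3 h4]; exact h.2⟩
    · intro h
      have hmem := h.1
      rw [hverts] at hmem
      exact ⟨(Finset.mem_erase.mp (Finset.mem_erase.mp hmem).2).2,
        by rw [hindAB r h1 h2 h3 h4]; exact h.2⟩
  have hretnot : ∀ r, IsRet A r → r ≠ py ∧ r ≠ x ∧ r ≠ y := by
    rintro r ⟨-, h2⟩
    refine ⟨?_, ?_, ?_⟩ <;> rintro rfl
    · have := hpydeg.1; omega
    · have := hlx.2.1; omega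
    · have := hly.2.1; omega
  have htz : t z = t' z := ht_other z hz_px hzpy hz_x hz_y
  have htq : t q = t' q := ht_other q hq_px hq_py hq_x hq_y
  refine ⟨t, ⟨?_, ?_, ?_, ?_⟩, ?_⟩
  · intro a b hab
    rcases harcA a b hab with ⟨rfl, rfl⟩ | ⟨rfl, rfl⟩ | ⟨rfl, rfl⟩ | ⟨rfl, rfl⟩ |
      ⟨rfl, rfl⟩ | ⟨h1, h2, h3, h4, h5, h6, h7, h8, hB⟩
    · rw [ht_px, ht_x]; linarith
    · rw [ht_py, ht_px]
    · rw [ht_py, ht_y]; linarith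
    · rw [htz, ht_px]; linarith
    · rw [htq, ht_py]; linarith
    · rw [ht_other a h1 h2 h3 h4, ht_other b h5 h6 h7 h8]; exact ht.1.1 a b hB
  · intro a b hab he
    rcases harcA a b hab with ⟨rfl, rfl⟩ | ⟨rfl, rfl⟩ | ⟨rfl, rfl⟩ | ⟨rfl, rfl⟩ |
      ⟨rfl, rfl⟩ | ⟨h1, h2, h3, h4, h5, h6, h7, h8, hB⟩
    · rw [ht_px, ht_x] at he; exact absurd he (by linarith)
    · exact hretpx
    · rw [ht_py, ht_y] at he; exact absurd he (by linarith)
    · rw [htz, ht_px] at he; exact absurd he (ne_of_lt hcz)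
    · rw [htq, ht_py] at he; exact absurd he (ne_of_lt hcq)
    · rw [ht_other a h1 h2 h3 h4, ht_other b h5 h6 h7 h8] at he
      exact (hretAB b h5 h6 h7 h8).mpr (ht.1.2.1 a b hB he)
  · rintro a ⟨haA, har, hal⟩
    by_cases h1 : a = px
    · subst h1
      exact ⟨x, hpxx, by rw [ht_px, ht_x]; linarith⟩
    by_cases h2 : a = py
    · subst h2
      exact ⟨y, hpyy, by rw [ht_py, ht_y]; linarith⟩
    have hax : a ≠ x := fun hh => hal (by rw [hh]; exact hlx)
    have hay : a ≠ y := fun hh => hal (by rw [hh]; exact hly)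
    have haB : a ∈ B.verts := hmemB a haA h1 h2
    obtain ⟨c0, hc0⟩ := outdeg_pos_child (outdeg_pos_of_internal haA har hal)
    have harcB2 : ∃ d, B.arc a d = true := by
      rcases harcA a c0 hc0 with ⟨rfl, -⟩ | ⟨rfl, -⟩ | ⟨rfl, -⟩ | ⟨rfl, rfl⟩ |
        ⟨rfl, rfl⟩ | ⟨-, -, -, -, -, -, -, -, hB⟩
      · exact absurd rfl h1
      · exact absurd rfl h2
      · exact absurd rfl h2
      · exact ⟨x, b_zx⟩
      · exact ⟨y, b_qy⟩
      · exact ⟨c0, hB⟩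
    obtain ⟨d, hd⟩ := harcB2
    have hnl : ¬ IsLeaf B a := fun hl => leaf_no_out hl hd
    obtain ⟨c', hc', hlt⟩ := ht.1.2.2.1 a ⟨haB, by rw [hroot]; exact har, hnl⟩
    rcases (harc a c').mp hc' with ⟨hab', -, -, hcp, hcp'⟩ | ⟨rfl, rfl⟩ | ⟨rfl, rfl⟩
    · have hcx : c' ≠ x := fun hh => h1 (hparx a (hh ▸ hab'))
      have hcy : c' ≠ y := fun hh => h2 (hpary a (hh ▸ hab'))
      refine ⟨c', hab', ?_⟩
      rw [ht_other a h1 h2 hax hay, ht_other c' hcp hcp' hcx hcy]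
      exact hlt
    · exact ⟨px, hzpx, by rw [htz, ht_px]; exact hcz⟩
    · exact ⟨py, hqpy, by rw [htq, ht_py]; exact hcq⟩
  · intro r a b hr har hbr hab he
    obtain ⟨hea, heb⟩ := he
    obtain ⟨hrpy, hrx, hry⟩ := hretnot r hr
    by_cases hrpx : r = px
    · subst hrpx
      rcases hparpx a har with rfl | rfl <;> rcases hparpx b hbr with rfl | rfl
      · exact hab rfl
      · rw [htz, ht_px] at heb; exact (ne_of_lt hcz) heb
      · rw [htz, ht_px] at hea; exact (ne_of_lt hcz) hea
      · exact hab rfl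
    · have haB := (hparents r a hrpx hrpy hrx hry).mp har
      have hbB := (hparents r b hrpx hrpy hrx hry).mp hbr
      have htr : t r = t' r := ht_other r hrpx hrpy hrx hry
      obtain ⟨ha1, ha2, ha3, ha4⟩ := hparne r a hrpx hrpy hrx hry har
      obtain ⟨hb1, hb2, hb3, hb4⟩ := hparne r b hrpx hrpy hrx hry hbr
      rw [htr, ht_other a ha1 ha2 ha3 ha4] at hea
      rw [htr, ht_other b hb1 hb2 hb3 hb4] at heb
      exact ht.1.2.2.2 r a b ((hretAB r hrpx hrpy hrx hry).mp hr) haB hbB hab ⟨hea, heb⟩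
  · intro r hr
    obtain ⟨hrpy, hrx, hry⟩ := hretnot r hr
    by_cases hrpx : r = px
    · subst hrpx
      refine ⟨py, ⟨hpypx, by rw [ht_py, ht_px]⟩, ?_⟩
      rintro s ⟨hsA, hse⟩
      rcases hparpx s hsA with rfl | rfl
      · rfl
      · rw [htz, ht_px] at hse; exact absurd hse (ne_of_lt hcz)
    · obtain ⟨u0, ⟨hu0B, hu0e⟩, huniq⟩ := ht.2 r ((hretAB r hrpx hrpy hrx hry).mp hr)
      have hu0A := (hparents r u0 hrpx hrpy hrx hry).mpr hu0B
      obtain ⟨hu1, hu2, hu3, hu4⟩ := hparne r u0 hrpx hrpy hrx hry hu0A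
      refine ⟨u0, ⟨hu0A, ?_⟩, ?_⟩
      · rw [ht_other u0 hu1 hu2 hu3 hu4, ht_other r hrpx hrpy hrx hry]; exact hu0e
      · rintro s ⟨hsA, hse⟩
        obtain ⟨hs1, hs2, hs3, hs4⟩ := hparne r s hrpx hrpy hrx hry hsA
        refine huniq s ⟨(hparents r s hrpx hrpy hrx hry).mp hsA, ?_⟩
        rw [← ht_other s hs1 hs2 hs3 hs4, ← ht_other r hrpx hrpy hrx hry]; exact hse

lemma orchard_has_HGT (N : Network) (h : IsOrchard N) :
    ∃ t : ℕ → ℝ, IsHGTConsistent N t := by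
  obtain ⟨N', hsteps, hsingle⟩ := h
  induction hsteps using Relation.ReflTransGen.head_induction_on with
  | refl => exact singleLeaf_HGT _ hsingle
  | head hab _ ih =>
    obtain ⟨t, ht⟩ := ih
    obtain ⟨x, y, hc | hrc⟩ := hab
    · exact pullback_cherry hc t ht
    · exact pullback_retcherry hrc t ht

lemma chain_restrict (N : Network) (l : ℕ) (M : ℕ → Network) (h0 : M 0 = N)
    (hstep : ∀ i : ℕ, i < l → IsLeafAddition (M i) (M (i + 1))) (t : ℕ → ℝ)
    (ht : IsHGTConsistent (M l) t) :
    IsNonTemporal N t ∧ inretCount N t ≤ l := by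
  have hcount0 : inretCount (M l) t = 0 := by
    have he : {r : ℕ | Inret (M l) t r} = ∅ := by
      ext r
      simp only [Set.mem_setOf_eq, Set.mem_empty_iff_false, iff_false]
      rintro ⟨hr, hall⟩
      obtain ⟨u, ⟨hu, hequ⟩, -⟩ := ht.2 r hr
      exact hall u hu hequ
    rw [inretCount, he, Set.ncard_empty]
  have key : ∀ j, j ≤ l →
      IsNonTemporal (M (l - j)) t ∧ inretCount (M (l - j)) t ≤ j := by
    intro j
    induction j with
    | zero =>
      intro _
      simpa using ⟨ht.1, hcount0⟩
    | succ j ih =>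
      intro hj
      obtain ⟨hnt, hcnt⟩ := ih (by omega)
      have hs := hstep (l - (j + 1)) (by omega)
      have heq : l - (j + 1) + 1 = l - j := by omega
      rw [heq] at hs
      obtain ⟨hnt', hcnt'⟩ := restrict_leafAdd hs t hnt
      exact ⟨hnt', by omega⟩
  have hfin := key l le_rfl
  rw [Nat.sub_self, h0] at hfin
  exact hfin

/-- If an orchard network `M ℓ` is obtained from `N` by adding `ℓ`
leaves to reticulation arcs, then any HGT-consistent labelling of `M ℓ` restricts
to a non-temporal labelling of `N` with at most `ℓ` inrets; in particular
`V_OR(N) ≤ L_OR(N)`. -/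
theorem restriction_of_HGT_labelling (N : Network) (l : ℕ) (M : ℕ → Network)
    (h0 : M 0 = N)
    (hstep : ∀ i : ℕ, i < l → IsRetArcLeafAddition (M i) (M (i + 1)))
    (horch : IsOrchard (M l)) :
    (∀ t : ℕ → ℝ, IsHGTConsistent (M l) t →
      IsNonTemporal N t ∧ inretCount N t ≤ l) ∧
    VOR N ≤ LOR N := by
  constructor
  · intro t ht
    refine chain_restrict N l M h0 (fun i hi => ?_) t ht
    obtain ⟨u, v, -, hadd⟩ := hstep i hi
    exact ⟨u, v, hadd⟩
  · have hmemL : l ∈ {k : ℕ | ReachableBy IsLeafAddition N k IsOrchard} := by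
      refine ⟨M, h0, fun i hi => ?_, horch⟩
      obtain ⟨u, v, -, hadd⟩ := hstep i hi
      exact ⟨u, v, hadd⟩
    have hne : {k : ℕ | ReachableBy IsLeafAddition N k IsOrchard}.Nonempty := ⟨l, hmemL⟩
    have hmem := Nat.sInf_mem hne
    obtain ⟨M', hM0, hMstep, hMorch⟩ := hmem
    obtain ⟨t, htc⟩ := orchard_has_HGT _ hMorch
    obtain ⟨hnt, hcnt⟩ := chain_restrict N _ M' hM0 hMstep t htc
    have hv : VOR N ≤ inretCount N t := Nat.sInf_le ⟨t, hnt, rfl⟩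
    have hl : LOR N = sInf {k : ℕ | ReachableBy IsLeafAddition N k IsOrchard} := rfl
    rw [hl]
    exact le_trans hv hcnt

end PhyloNet
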